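/- Let F be a cyclic Minkowski norm on a finite-dimensional real Lie algebra g with spray vector field η, connection operator N (with N differentiable in its first variable), and associated Riemann curvature R_y. Then every y in the center of g with y ≠ 0 satisfies g_y([u,v],y) = 0 for all u,v ∈ g, and consequently R_y(u) = 0 for all u ∈ g. -/

import Mathlib

noncomputable section

/-- The fundamental tensor `g_y(u,v) = (1/2)·∂²/∂s∂t|_{s=t=0} F(y+su+tv)²`. -/
def gTensor {V : Type*} [NormedAddCommGroup V] [NormedSpace ℝ V]
    (F : V → ℝ) (y u v : V) : ℝ :=
  (1 / 2) * deriv (fun s : ℝ => deriv (fun t : ℝ => (F (y + s • u + t • v)) ^ 2) 0) 0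

/-- The Cartan tensor `C_y(u,v,w) = (1/2)·d/dt|_{t=0} g_{y+tw}(u,v)`. -/
def cartanTensor {V : Type*} [NormedAddCommGroup V] [NormedSpace ℝ V]
    (F : V → ℝ) (y u v w : V) : ℝ :=
  (1 / 2) * deriv (fun t : ℝ => gTensor F (y + t • w) u v) 0

/-- `F` is a Minkowski norm: positive and smooth away from `0`, positively
homogeneous of degree one, with positive-definite symmetric bilinear fundamental tensor. -/
structure IsMinkowskiNorm {V : Type*} [NormedAddCommGroup V] [NormedSpace ℝ V]
    (F : V → ℝ) : Prop where
  pos : ∀ y : V, y ≠ 0 → 0 < F y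
  smooth : ContDiffOn ℝ (⊤ : ℕ∞) F {(0 : V)}ᶜ
  homog : ∀ c : ℝ, 0 < c → ∀ y : V, F (c • y) = c * F y
  g_symm : ∀ y : V, y ≠ 0 → ∀ u v : V, gTensor F y u v = gTensor F y v u
  g_add_left : ∀ y : V, y ≠ 0 → ∀ u u' v : V,
    gTensor F y (u + u') v = gTensor F y u v + gTensor F y u' v
  g_smul_left : ∀ y : V, y ≠ 0 → ∀ (c : ℝ) (u v : V),
    gTensor F y (c • u) v = c * gTensor F y u v
  g_posdef : ∀ y : V, y ≠ 0 → ∀ u : V, u ≠ 0 → 0 < gTensor F y u u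

/-- A Lie algebra structure on the real vector space `V`, given as a bilinear map. -/
structure IsLieBracket {V : Type*} [AddCommGroup V] [Module ℝ V]
    (L : V →ₗ[ℝ] V →ₗ[ℝ] V) : Prop where
  alternate : ∀ x : V, L x x = 0
  jacobi : ∀ x y z : V, L x (L y z) = L (L x y) z + L y (L x z)

/-- The cyclic condition for a Minkowski norm on a Lie algebra. -/
def IsCyclicNorm {V : Type*} [NormedAddCommGroup V] [NormedSpace ℝ V]
    (L : V →ₗ[ℝ] V →ₗ[ℝ] V) (F : V → ℝ) : Prop :=
  ∀ y : V, y ≠ 0 → ∀ x z : V,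
    gTensor F y (L x y) z + gTensor F y (L y z) x + gTensor F y (L z x) y = 0

/-- The Riemann curvature `R_y(u) = D_η N(y,u) − N(y,N(y,u)) + N(y,[y,u]) − [y,N(y,u)]`. -/
def RiemannCurv {V : Type*} [NormedAddCommGroup V] [NormedSpace ℝ V]
    (L : V →ₗ[ℝ] V →ₗ[ℝ] V) (η : V → V) (N : V → V → V) (y u : V) : V :=
  fderiv ℝ (fun z => N z u) y (η y) - N y (N y u) + N y (L y u) - L y (N y u)

/-- Projection onto `m` along `h` in the decomposition `g = h ⊕ m`. -/
def projTo {V : Type*} [AddCommGroup V] [Module ℝ V] (h m : Submodule ℝ V)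
    (hcompl : IsCompl h m) : V →ₗ[ℝ] m :=
  m.linearProjOfIsCompl h hcompl.symm

/-- The inner product making the basis `e` orthonormal. -/
def basisInner {V : Type*} [AddCommGroup V] [Module ℝ V] {ι : Type*} [Fintype ι]
    (e : Module.Basis ι ℝ V) (x y : V) : ℝ :=
  ∑ k, e.repr x k * e.repr y k


/-- For a cyclic Minkowski norm on `g`, every nonzero `y` in the center
of `g` satisfies `g_y([u,v],y) = 0` for all `u,v`, and consequently `R_y ≡ 0`. -/
theorem cyclic_center_flat
    {g : Type*} [NormedAddCommGroup g] [NormedSpace ℝ g] [FiniteDimensional ℝ g]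
    (L : g →ₗ[ℝ] g →ₗ[ℝ] g) (hL : IsLieBracket L)
    (F : g → ℝ) (hF : IsMinkowskiNorm F) (hcyc : IsCyclicNorm L F)
    (η : g → g) (N : g → g → g)
    (hη : ∀ y : g, y ≠ 0 → ∀ u : g, gTensor F y (η y) u = gTensor F y y (L u y))
    (hN : ∀ y : g, y ≠ 0 → ∀ u v : g,
      2 * gTensor F y (N y v) u =
        gTensor F y (L u v) y + gTensor F y (L u y) v + gTensor F y (L v y) u
          - 2 * cartanTensor F y u v (η y))
    (hNdiff : ∀ u : g, DifferentiableOn ℝ (fun z => N z u) {(0 : g)}ᶜ) :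
    ∀ y : g, y ≠ 0 → (∀ v : g, L y v = 0) →
      (∀ u v : g, gTensor F y (L u v) y = 0) ∧ (∀ u : g, RiemannCurv L η N y u = 0) := by
  intro y hy0 hyc
  -- bracket with y on the right vanishes
  have hyc' : ∀ x : g, L x y = 0 := by
    intro x
    have h := hL.alternate (x + y)
    simp [map_add, hL.alternate, hyc] at h
    exact h
  -- gTensor with 0 in the left slot vanishes
  have gz : ∀ u v : g, gTensor F y (0 : g) v = 0 := by
    intro u v
    have := hF.g_smul_left y hy0 0 u v
    simpa using this
  -- gTensor with 0 in the right slot vanishes (direct computation)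
  have gzr : ∀ u : g, gTensor F y u (0 : g) = 0 := by
    intro u
    simp [gTensor]
  -- cartanTensor with 0 in the last slot vanishes
  have cz : ∀ u v : g, cartanTensor F y u v (0 : g) = 0 := by
    intro u v
    simp [cartanTensor]
  -- Part 1
  have part1 : ∀ u v : g, gTensor F y (L u v) y = 0 := by
    intro u v
    have h := hcyc y hy0 v u
    rw [hyc' v, hyc u] at h
    rw [gz v u, gz u v] at h
    linarith
  refine ⟨part1, ?_⟩
  -- η y = 0
  have hηy : η y = 0 := by
    by_contra hne
    have hpos := hF.g_posdef y hy0 (η y) hne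
    have h := hη y hy0 (η y)
    rw [hyc' (η y), gzr y] at h
    linarith
  -- N y v = 0 for all v
  have hNy : ∀ v : g, N y v = 0 := by
    intro v
    by_contra hne
    have hpos := hF.g_posdef y hy0 (N y v) hne
    have h := hN y hy0 (N y v) v
    rw [part1 (N y v) v, hyc' (N y v), hyc' v, gz (N y v) v, gz v (N y v),
      hηy, cz (N y v) v] at h
    linarith
  intro u
  unfold RiemannCurv
  rw [hηy, hNy (N y u), hNy (L y u), hNy u, map_zero, hyc 0]
  simp

end
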